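/- The horizon Killing vector fields of Kerr–de Sitter are lightlike and orthogonal to the horizons, with non-degenerate transversal derivative: for h ∈ {e, c} let W_h := (1, 0, a/(r_h² + a²), 0) ∈ ℝ⁴ (components with respect to the coordinates (t*, r, φ*, θ)). Then for every θ ∈ ℝ: (i) W_hᵀ · g*(r_h, θ) · W_h = 0; (ii) the t*-, φ*- and θ-components of the vector g*(r_h, θ)·W_h vanish, while its r-component equals ε_h · ρ²(r_h,θ)/(b(r_h² + a²)) with ε_e = −1 and ε_c = +1, which is nonzero; (iii) (d/dr)[W_hᵀ · g*(r, θ) · W_h] evaluated at r = r_h equals −μ'(r_h)·ρ²(r_h,θ)/(b²(r_h² + a²)²), which is nonzero since μ'(r_h) ≠ 0. -/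

import Mathlib

open Set Matrix

noncomputable section

namespace KdSHorizonKVF

/-- The horizon quartic `μ(r) = (r² + a²)(1 − Λr²/3) − 2mr`. -/
def mu (a m Λ r : ℝ) : ℝ := (r ^ 2 + a ^ 2) * (1 - Λ * r ^ 2 / 3) - 2 * m * r

/-- `b = 1 + Λa²/3`. -/
def bc (a Λ : ℝ) : ℝ := 1 + Λ * a ^ 2 / 3

/-- `c(θ) = 1 + (Λa²/3)cos²θ`. -/
def cth (a Λ θ : ℝ) : ℝ := 1 + Λ * a ^ 2 / 3 * Real.cos θ ^ 2

/-- `ρ²(r,θ) = r² + a²cos²θ`. -/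
def rhosq (a r θ : ℝ) : ℝ := r ^ 2 + a ^ 2 * Real.cos θ ^ 2

/-- `S(r) = 2(r − r_e)/(r_c − r_e) − 1`. -/
def Sf (re rc r : ℝ) : ℝ := 2 * (r - re) / (rc - re) - 1

/-- The extended Kerr–de Sitter metric in the coordinates `(t*, r, φ*, θ)`. -/
def gstar (a m Λ r0 rC re rc r θ : ℝ) : Matrix (Fin 4) (Fin 4) ℝ :=
  !![(a ^ 2 * cth a Λ θ * Real.sin θ ^ 2 - mu a m Λ r) / (bc a Λ ^ 2 * rhosq a r θ),
       Sf re rc r / bc a Λ,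
       a * Real.sin θ ^ 2 * (mu a m Λ r - cth a Λ θ * (r ^ 2 + a ^ 2)) /
         (bc a Λ ^ 2 * rhosq a r θ), 0;
     Sf re rc r / bc a Λ, -4 * rhosq a r θ / ((r - r0) * (r - rC) * (rc - re) ^ 2),
       -(a * Real.sin θ ^ 2 * Sf re rc r / bc a Λ), 0;
     a * Real.sin θ ^ 2 * (mu a m Λ r - cth a Λ θ * (r ^ 2 + a ^ 2)) /
       (bc a Λ ^ 2 * rhosq a r θ), -(a * Real.sin θ ^ 2 * Sf re rc r / bc a Λ),
       Real.sin θ ^ 2 * (cth a Λ θ * (r ^ 2 + a ^ 2) ^ 2 -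
         mu a m Λ r * a ^ 2 * Real.sin θ ^ 2) / (bc a Λ ^ 2 * rhosq a r θ), 0;
     0, 0, 0, rhosq a r θ / cth a Λ θ]

/-- The coordinate expression `W_h = ∂_{t*} + (a/(r_h²+a²))∂_{φ*}` of the horizon
Killing vector field, with respect to the coordinates `(t*, r, φ*, θ)`. -/
def W (a rh : ℝ) : Fin 4 → ℝ := ![1, 0, a / (rh ^ 2 + a ^ 2), 0]

lemma no_two_neg (Λ m x y : ℝ) (hΛ : 0 < Λ) (hm : 0 < m) (hx : x < 0) (hy : y < 0)
    (hxy : x < y) (hqx : x * (1 - Λ * x ^ 2 / 3) - 2 * m = 0)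
    (hqy : y * (1 - Λ * y ^ 2 / 3) - 2 * m = 0) : False := by
  have hd : (x - y) * (1 - Λ * (x ^ 2 + x * y + y ^ 2) / 3) = 0 := by
    linear_combination hqx - hqy
  have h2 : Λ * (x ^ 2 + x * y + y ^ 2) = 3 := by
    have hne : x - y ≠ 0 := sub_ne_zero_of_ne (ne_of_lt hxy)
    have := (mul_eq_zero.mp hd).resolve_left hne
    linarith [this]
  have hxx : 1 - Λ * x ^ 2 / 3 < 0 := by nlinarith
  nlinarith [mul_pos (mul_pos_of_neg_of_neg hx hy) hΛ, mul_pos hΛ (mul_pos_of_neg_of_neg hy hy)]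

lemma root_ne_zero (a m Λ x y rh : ℝ) (hm : 0 < m) (hΛ : 0 < Λ)
    (hxy : x < y) (hyr : y < rh)
    (hmx : mu a m Λ x = 0) (hmy : mu a m Λ y = 0) (hmr : mu a m Λ rh = 0) : rh ≠ 0 := by
  intro h
  subst h
  simp only [mu] at hmx hmy hmr
  have ha : a = 0 := by
    have h2 : a ^ 2 = 0 := by linarith [hmr]
    exact pow_eq_zero_iff (n := 2) (by norm_num) |>.mp h2
  subst ha
  have hx0 : x < 0 := lt_trans hxy hyr
  have hy0 : y < 0 := hyr
  have hqx : x * (1 - Λ * x ^ 2 / 3) - 2 * m = 0 := by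
    have : x * (x * (1 - Λ * x ^ 2 / 3) - 2 * m) = 0 := by linear_combination hmx
    exact (mul_eq_zero.mp this).resolve_left (ne_of_lt hx0)
  have hqy : y * (1 - Λ * y ^ 2 / 3) - 2 * m = 0 := by
    have : y * (y * (1 - Λ * y ^ 2 / 3) - 2 * m) = 0 := by linear_combination hmy
    exact (mul_eq_zero.mp this).resolve_left (ne_of_lt hy0)
  exact no_two_neg Λ m x y hΛ hm hx0 hy0 hxy hqx hqy

lemma mu_deriv_factor (a m Λ p q s w : ℝ) (hΛ : Λ ≠ 0)
    (hwp : w ≠ p) (hwq : w ≠ q) (hws : w ≠ s) (hsq : s ≠ q) (hsp : s ≠ p) (hqp : q ≠ p)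
    (hp : mu a m Λ p = 0) (hq : mu a m Λ q = 0) (hs : mu a m Λ s = 0)
    (hw : mu a m Λ w = 0) :
    2 * w * (1 - Λ * w ^ 2 / 3) + (w ^ 2 + a ^ 2) * (-(Λ * (2 * w) / 3)) - 2 * m
      = -(Λ / 3) * (w - p) * (w - q) * (w - s) := by
  set c2 : ℝ := 1 - Λ * a ^ 2 / 3 with hc2
  have F : ∀ z : ℝ, mu a m Λ z = 0 → w ≠ z →
      -(Λ/3) * (w^3 + w^2*z + w*z^2 + z^3) + c2 * (w + z) - 2*m = 0 := by
    intro z hz hwz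
    have h : (w - z) * (-(Λ/3) * (w^3 + w^2*z + w*z^2 + z^3) + c2 * (w + z) - 2*m) = 0 := by
      simp only [mu] at hw hz
      linear_combination hw - hz
    exact (mul_eq_zero.mp h).resolve_left (sub_ne_zero_of_ne hwz)
  have hFs := F s hs hws
  have hFq := F q hq hwq
  have hFp := F p hp hwp
  have hG : -(Λ/3) * (w^2 + w*(s+q) + s^2 + s*q + q^2) + c2 = 0 := by
    have h : (s - q) * (-(Λ/3) * (w^2 + w*(s+q) + s^2 + s*q + q^2) + c2) = 0 := by
      linear_combination hFs - hFq
    exact (mul_eq_zero.mp h).resolve_left (sub_ne_zero_of_ne hsq)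
  have hG2 : -(Λ/3) * (w^2 + w*(s+p) + s^2 + s*p + p^2) + c2 = 0 := by
    have h : (s - p) * (-(Λ/3) * (w^2 + w*(s+p) + s^2 + s*p + p^2) + c2) = 0 := by
      linear_combination hFs - hFp
    exact (mul_eq_zero.mp h).resolve_left (sub_ne_zero_of_ne hsp)
  have he1 : w + s + q + p = 0 := by
    have h : (-(Λ/3) * (q - p)) * (w + s + q + p) = 0 := by
      linear_combination hG - hG2
    refine (mul_eq_zero.mp h).resolve_left ?_
    exact mul_ne_zero (neg_ne_zero.mpr (div_ne_zero hΛ (by norm_num))) (sub_ne_zero_of_ne hqp)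
  linear_combination hFs + (w - s) * hG - (Λ/3) * (w - q) * (w - s) * he1

set_option maxHeartbeats 2000000 in
lemma main_aux (a m Λ r0 rC re rc rh εh θ : ℝ) (hB : bc a Λ ≠ 0)
    (hrooth : mu a m Λ rh = 0) (hS : Sf re rc rh = εh) (hε : εh ≠ 0) (hrh0 : rh ≠ 0)
    (hDne : 2 * rh * (1 - Λ * rh ^ 2 / 3) + (rh ^ 2 + a ^ 2) * (-(Λ * (2 * rh) / 3)) - 2 * m
      ≠ 0) :
    (W a rh ⬝ᵥ (gstar a m Λ r0 rC re rc rh θ).mulVec (W a rh) = 0) ∧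
      ((gstar a m Λ r0 rC re rc rh θ).mulVec (W a rh) 0 = 0 ∧
       (gstar a m Λ r0 rC re rc rh θ).mulVec (W a rh) 2 = 0 ∧
       (gstar a m Λ r0 rC re rc rh θ).mulVec (W a rh) 3 = 0 ∧
       (gstar a m Λ r0 rC re rc rh θ).mulVec (W a rh) 1
         = εh * rhosq a rh θ / (bc a Λ * (rh ^ 2 + a ^ 2)) ∧
       εh * rhosq a rh θ / (bc a Λ * (rh ^ 2 + a ^ 2)) ≠ 0) ∧
      (deriv (fun r => W a rh ⬝ᵥ (gstar a m Λ r0 rC re rc r θ).mulVec (W a rh)) rh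
         = -(deriv (fun r => mu a m Λ r) rh * rhosq a rh θ /
             (bc a Λ ^ 2 * (rh ^ 2 + a ^ 2) ^ 2)) ∧
       -(deriv (fun r => mu a m Λ r) rh * rhosq a rh θ /
           (bc a Λ ^ 2 * (rh ^ 2 + a ^ 2) ^ 2)) ≠ 0) := by
  have hrh2 : 0 < rh ^ 2 := by positivity
  have hQpos : 0 < rh ^ 2 + a ^ 2 := by nlinarith [sq_nonneg a]
  have hQ : rh ^ 2 + a ^ 2 ≠ 0 := ne_of_gt hQpos
  have hPpos : 0 < rhosq a rh θ := by
    have : 0 ≤ a ^ 2 * Real.cos θ ^ 2 := by positivity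
    unfold rhosq; linarith
  have hP : rhosq a rh θ ≠ 0 := ne_of_gt hPpos
  have hsin : Real.sin θ ^ 2 = 1 - Real.cos θ ^ 2 := by
    have := Real.sin_sq_add_cos_sq θ; linarith
  -- the quadratic form as a function of r
  have hfun : (fun r => W a rh ⬝ᵥ (gstar a m Λ r0 rC re rc r θ).mulVec (W a rh))
      = fun r => (cth a Λ θ * Real.sin θ ^ 2 * a ^ 2 * (r ^ 2 - rh ^ 2) ^ 2
          - mu a m Λ r * (rh ^ 2 + a ^ 2 * Real.cos θ ^ 2) ^ 2) /
        ((rh ^ 2 + a ^ 2) ^ 2 * bc a Λ ^ 2 * (r ^ 2 + a ^ 2 * Real.cos θ ^ 2)) := by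
    funext r
    simp only [gstar, W, mulVec, dotProduct, Fin.sum_univ_four, Matrix.cons_val',
      Matrix.cons_val_zero, Matrix.cons_val_one, Matrix.head_cons, Matrix.empty_val',
      Matrix.cons_val_fin_one, Matrix.head_fin_const, Fin.isValue, Matrix.cons_val_two,
      Matrix.tail_cons, Matrix.cons_val_three, Matrix.of_apply, rhosq]
    rw [hsin]
    by_cases h0 : r ^ 2 + a ^ 2 * Real.cos θ ^ 2 = 0
    · rw [h0]; simp
    · field_simp; ring
  -- derivative of μ
  have hmu : HasDerivAt (fun r => mu a m Λ r)
      (2 * rh * (1 - Λ * rh ^ 2 / 3) + (rh ^ 2 + a ^ 2) * (-(Λ * (2 * rh) / 3)) - 2 * m) rh := by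
    have h1 : HasDerivAt (fun r : ℝ => r ^ 2 + a ^ 2) (2 * rh) rh := by
      simpa using (hasDerivAt_pow 2 rh).add_const (a ^ 2)
    have h2 : HasDerivAt (fun r : ℝ => 1 - Λ * r ^ 2 / 3) (-(Λ * (2 * rh) / 3)) rh := by
      have := (((hasDerivAt_pow 2 rh).const_mul Λ).div_const 3).const_sub 1
      simpa using this
    have h3 : HasDerivAt (fun r : ℝ => 2 * m * r) (2 * m) rh := by
      simpa using (hasDerivAt_id rh).const_mul (2 * m)
    exact (h1.mul h2).sub h3
  refine ⟨?_, ⟨?_, ?_, ?_, ?_, ?_⟩, ?_, ?_⟩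
  · -- part (i)
    have := congrFun hfun rh
    rw [this, hrooth]
    simp
  · simp only [gstar, W, mulVec, dotProduct, Fin.sum_univ_four, Matrix.cons_val',
      Matrix.cons_val_zero, Matrix.cons_val_one, Matrix.head_cons, Matrix.empty_val',
      Matrix.cons_val_fin_one, Matrix.head_fin_const, Fin.isValue, Matrix.cons_val_two,
      Matrix.tail_cons, Matrix.cons_val_three, Matrix.of_apply]
    rw [hrooth]
    field_simp
    ring
  · simp only [gstar, W, mulVec, dotProduct, Fin.sum_univ_four, Matrix.cons_val',
      Matrix.cons_val_zero, Matrix.cons_val_one, Matrix.head_cons, Matrix.empty_val',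
      Matrix.cons_val_fin_one, Matrix.head_fin_const, Fin.isValue, Matrix.cons_val_two,
      Matrix.tail_cons, Matrix.cons_val_three, Matrix.of_apply]
    rw [hrooth]
    field_simp
    ring
  · simp [gstar, W, mulVec, dotProduct, Fin.sum_univ_four]
  · simp only [gstar, W, mulVec, dotProduct, Fin.sum_univ_four, Matrix.cons_val',
      Matrix.cons_val_zero, Matrix.cons_val_one, Matrix.head_cons, Matrix.empty_val',
      Matrix.cons_val_fin_one, Matrix.head_fin_const, Fin.isValue, Matrix.cons_val_two,
      Matrix.tail_cons, Matrix.cons_val_three, Matrix.of_apply, rhosq]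
    rw [hS, hsin]
    field_simp
    ring
  · exact div_ne_zero (mul_ne_zero hε hP) (mul_ne_zero hB hQ)
  · -- part (iii): the derivative
    rw [hfun, hmu.deriv]
    simp only [rhosq]
    have hsq : HasDerivAt (fun r : ℝ => (r ^ 2 - rh ^ 2) ^ 2)
        (2 * (rh ^ 2 - rh ^ 2) ^ 1 * (2 * rh)) rh := by
      have h : HasDerivAt (fun r : ℝ => r ^ 2 - rh ^ 2) (2 * rh) rh := by
        simpa using (hasDerivAt_pow 2 rh).sub_const (rh ^ 2)
      exact h.pow 2
    have hn : HasDerivAt (fun r => cth a Λ θ * Real.sin θ ^ 2 * a ^ 2 * (r ^ 2 - rh ^ 2) ^ 2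
        - mu a m Λ r * (rh ^ 2 + a ^ 2 * Real.cos θ ^ 2) ^ 2)
        (cth a Λ θ * Real.sin θ ^ 2 * a ^ 2 * (2 * (rh ^ 2 - rh ^ 2) ^ 1 * (2 * rh))
          - (2 * rh * (1 - Λ * rh ^ 2 / 3) + (rh ^ 2 + a ^ 2) * (-(Λ * (2 * rh) / 3)) - 2 * m)
            * (rh ^ 2 + a ^ 2 * Real.cos θ ^ 2) ^ 2) rh :=
      (hsq.const_mul _).sub (hmu.mul_const _)
    have hd : HasDerivAt (fun r : ℝ =>
        (rh ^ 2 + a ^ 2) ^ 2 * bc a Λ ^ 2 * (r ^ 2 + a ^ 2 * Real.cos θ ^ 2))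
        ((rh ^ 2 + a ^ 2) ^ 2 * bc a Λ ^ 2 * (2 * rh)) rh := by
      have h : HasDerivAt (fun r : ℝ => r ^ 2 + a ^ 2 * Real.cos θ ^ 2) (2 * rh) rh := by
        simpa using (hasDerivAt_pow 2 rh).add_const (a ^ 2 * Real.cos θ ^ 2)
      exact h.const_mul _
    have hP' : rh ^ 2 + a ^ 2 * Real.cos θ ^ 2 ≠ 0 := by
      simpa [rhosq] using hP
    have hdne : (rh ^ 2 + a ^ 2) ^ 2 * bc a Λ ^ 2 * (rh ^ 2 + a ^ 2 * Real.cos θ ^ 2) ≠ 0 :=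
      mul_ne_zero (mul_ne_zero (pow_ne_zero 2 hQ) (pow_ne_zero 2 hB)) hP'
    erw [(hn.div hd hdne).deriv, hrooth]
    field_simp
    ring
  · rw [hmu.deriv]
    exact neg_ne_zero.mpr (div_ne_zero (mul_ne_zero hDne hP)
      (mul_ne_zero (pow_ne_zero 2 hB) (pow_ne_zero 2 hQ)))

end KdSHorizonKVF

open KdSHorizonKVF

set_option maxHeartbeats 1000000 in
/-- **The horizon Killing vector fields of Kerr–de Sitter are lightlike and orthogonal to
the horizons, with non-degenerate transversal derivative**: for `h ∈ {e, c}`,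
(i) `W_hᵀ g*(r_h,θ) W_h = 0`; (ii) the `t*`-, `φ*`- and `θ`-components of `g*(r_h,θ)·W_h`
vanish while the `r`-component equals `ε_h ρ²(r_h,θ)/(b(r_h²+a²)) ≠ 0` (`ε_e = −1`,
`ε_c = +1`); (iii) `d/dr[W_hᵀ g*(r,θ) W_h]|_{r=r_h} = −μ'(r_h)ρ²(r_h,θ)/(b²(r_h²+a²)²) ≠ 0`. -/
theorem kds_horizon_killing_fields (a m Λ r0 rC re rc : ℝ) (hm : 0 < m) (hΛ : 0 < Λ)
    (h01 : r0 < rC) (h12 : rC < re) (h23 : re < rc)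
    (hroot0 : mu a m Λ r0 = 0) (hrootC : mu a m Λ rC = 0)
    (hroote : mu a m Λ re = 0) (hrootc : mu a m Λ rc = 0) :
    ∀ θ rh εh : ℝ, ((rh = re ∧ εh = -1) ∨ (rh = rc ∧ εh = 1)) →
      (W a rh ⬝ᵥ (gstar a m Λ r0 rC re rc rh θ).mulVec (W a rh) = 0) ∧
      ((gstar a m Λ r0 rC re rc rh θ).mulVec (W a rh) 0 = 0 ∧
       (gstar a m Λ r0 rC re rc rh θ).mulVec (W a rh) 2 = 0 ∧
       (gstar a m Λ r0 rC re rc rh θ).mulVec (W a rh) 3 = 0 ∧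
       (gstar a m Λ r0 rC re rc rh θ).mulVec (W a rh) 1
         = εh * rhosq a rh θ / (bc a Λ * (rh ^ 2 + a ^ 2)) ∧
       εh * rhosq a rh θ / (bc a Λ * (rh ^ 2 + a ^ 2)) ≠ 0) ∧
      (deriv (fun r => W a rh ⬝ᵥ (gstar a m Λ r0 rC re rc r θ).mulVec (W a rh)) rh
         = -(deriv (fun r => mu a m Λ r) rh * rhosq a rh θ /
             (bc a Λ ^ 2 * (rh ^ 2 + a ^ 2) ^ 2)) ∧
       -(deriv (fun r => mu a m Λ r) rh * rhosq a rh θ /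
           (bc a Λ ^ 2 * (rh ^ 2 + a ^ 2) ^ 2)) ≠ 0) := by
  intro θ rh εh hcase
  have hΛ' : Λ ≠ 0 := ne_of_gt hΛ
  have hB : bc a Λ ≠ 0 := by
    have : (0:ℝ) < bc a Λ := by unfold bc; positivity
    exact ne_of_gt this
  rcases hcase with ⟨rfl, rfl⟩ | ⟨rfl, rfl⟩
  · -- event horizon: the variable `re` has been replaced by `rh`
    refine main_aux a m Λ r0 rC rh rc rh (-1) θ hB hroote ?_ (by norm_num)
      (root_ne_zero a m Λ r0 rC rh hm hΛ h01 h12 hroot0 hrootC hroote) ?_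
    · simp [Sf]
    · rw [mu_deriv_factor a m Λ r0 rC rc rh hΛ' (ne_of_gt (lt_trans h01 h12))
        (ne_of_gt h12) (ne_of_lt h23) (ne_of_gt (lt_trans h12 h23))
        (ne_of_gt (lt_trans h01 (lt_trans h12 h23))) (ne_of_gt h01)
        hroot0 hrootC hrootc hroote]
      exact mul_ne_zero (mul_ne_zero (mul_ne_zero
        (neg_ne_zero.mpr (div_ne_zero hΛ' (by norm_num)))
        (sub_ne_zero_of_ne (ne_of_gt (lt_trans h01 h12))))
        (sub_ne_zero_of_ne (ne_of_gt h12)))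
        (sub_ne_zero_of_ne (ne_of_lt h23))
  · -- cosmological horizon: the variable `rc` has been replaced by `rh`
    refine main_aux a m Λ r0 rC re rh rh 1 θ hB hrootc ?_ (by norm_num)
      (root_ne_zero a m Λ rC re rh hm hΛ h12 h23 hrootC hroote hrootc) ?_
    · have h : rh - re ≠ 0 := sub_ne_zero_of_ne (ne_of_gt h23)
      unfold Sf
      field_simp
      norm_num
    · rw [mu_deriv_factor a m Λ r0 rC re rh hΛ'
        (ne_of_gt (lt_trans h01 (lt_trans h12 h23)))
        (ne_of_gt (lt_trans h12 h23)) (ne_of_gt h23)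
        (ne_of_gt h12) (ne_of_gt (lt_trans h01 h12)) (ne_of_gt h01)
        hroot0 hrootC hroote hrootc]
      exact mul_ne_zero (mul_ne_zero (mul_ne_zero
        (neg_ne_zero.mpr (div_ne_zero hΛ' (by norm_num)))
        (sub_ne_zero_of_ne (ne_of_gt (lt_trans h01 (lt_trans h12 h23)))))
        (sub_ne_zero_of_ne (ne_of_gt (lt_trans h12 h23))))
        (sub_ne_zero_of_ne (ne_of_gt h23))
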